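/- For every n ≥ 1, the sum over i = 1 to n−1 of 4^{⌈log₂ i⌉} is strictly less than (196/243)·n³. -/

import Mathlib

lemma clog_eq_succ {m i : ℕ} (h1 : 2 ^ m < i) (h2 : i ≤ 2 ^ (m + 1)) :
    Nat.clog 2 i = m + 1 :=
  le_antisymm ((Nat.clog_le_iff_le_pow one_lt_two).mpr h2)
    ((Nat.lt_clog_iff_pow_lt one_lt_two).mpr h1)

lemma T_pow (m : ℕ) :
    ∑ i ∈ Finset.Icc 1 (2 ^ m), (4 : ℝ) ^ (Nat.clog 2 i) = (4 * 8 ^ m + 3) / 7 := by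
  induction m with
  | zero =>
    rw [pow_zero, Finset.Icc_self, Finset.sum_singleton, Nat.clog_one_right, pow_zero]
    norm_num
  | succ m ih =>
    have hsplit := Finset.sum_Ioc_consecutive (f := fun i => (4 : ℝ) ^ (Nat.clog 2 i))
      (Nat.zero_le (2 ^ m)) (Nat.pow_le_pow_right (by norm_num) (Nat.le_succ m))
    rw [show Finset.Icc 1 (2 ^ (m+1)) = Finset.Ioc 0 (2 ^ (m+1)) from rfl, ← hsplit]
    rw [show Finset.Ioc 0 (2 ^ m) = Finset.Icc 1 (2 ^ m) from rfl, ih]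
    have hc : ∀ i ∈ Finset.Ioc (2 ^ m) (2 ^ (m + 1)),
        (4 : ℝ) ^ (Nat.clog 2 i) = 4 ^ (m + 1) := by
      intro i hi
      rw [Finset.mem_Ioc] at hi
      rw [clog_eq_succ hi.1 hi.2]
    rw [Finset.sum_congr rfl hc, Finset.sum_const, Nat.card_Ioc,
      show 2 ^ (m + 1) - 2 ^ m = 2 ^ m from by rw [pow_succ]; omega,
      nsmul_eq_mul]
    have h8 : (8 : ℝ) ^ m = 2 ^ m * 4 ^ m := by rw [← mul_pow]; norm_num
    push_cast
    rw [pow_succ (8:ℝ), pow_succ (4:ℝ), h8]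
    ring

/-- `∑_{i=1}^{n-1} 4^{⌈log₂ i⌉} < (196/243) n³` for every `n ≥ 1`. -/
theorem sum_pow_four_clog_lt (n : ℕ) (hn : 1 ≤ n) :
    ∑ i ∈ Finset.Icc 1 (n - 1), (4 : ℝ) ^ (Nat.clog 2 i) < 196 / 243 * (n : ℝ) ^ 3 := by
  set N := n - 1 with hN
  have hnN : (n : ℝ) = (N : ℝ) + 1 := by
    have : n = N + 1 := by omega
    rw [this]; push_cast; ring
  rcases Nat.lt_or_ge N 2 with hN2 | hN2
  · interval_cases N
    · rw [hnN]; simp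
    · rw [hnN, Finset.Icc_self, Finset.sum_singleton, Nat.clog_one_right, pow_zero]
      norm_num
  · -- N ≥ 2
    set m := Nat.clog 2 N with hm
    have hm1 : 1 ≤ m := Nat.clog_pos one_lt_two hN2
    set a := 2 ^ (m - 1) with ha
    have haN : a < N := Nat.pow_pred_clog_lt_self one_lt_two (by omega)
    have hNa : N ≤ 2 ^ m := Nat.le_pow_clog one_lt_two N
    have hma : 2 ^ m = 2 * a := by
      rw [ha, ← pow_succ']
      congr 1; omega
    have hsplit := Finset.sum_Ioc_consecutive (f := fun i => (4 : ℝ) ^ (Nat.clog 2 i))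
      (Nat.zero_le a) haN.le
    have hc : ∀ i ∈ Finset.Ioc a N, (4 : ℝ) ^ (Nat.clog 2 i) = 4 ^ m := by
      intro i hi
      rw [Finset.mem_Ioc] at hi
      have h1 : 2 ^ (m - 1) < i := by rw [← ha]; exact hi.1
      have h2 : i ≤ 2 ^ (m - 1 + 1) := by
        rw [show m - 1 + 1 = m from by omega]; exact hi.2.trans hNa
      rw [clog_eq_succ h1 h2, show m - 1 + 1 = m from by omega]
    have hsum : ∑ i ∈ Finset.Icc 1 N, (4 : ℝ) ^ (Nat.clog 2 i)
        = (4 * 8 ^ (m - 1) + 3) / 7 + ((N : ℝ) - a) * 4 ^ m := by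
      rw [show Finset.Icc 1 N = Finset.Ioc 0 N from rfl, ← hsplit,
        show Finset.Ioc 0 a = Finset.Icc 1 a from rfl, ha, T_pow]
      congr 1
      rw [Finset.sum_congr rfl hc, Finset.sum_const, Nat.card_Ioc, nsmul_eq_mul,
        Nat.cast_sub haN.le]
    rw [hsum]
    have h4m : (4 : ℝ) ^ m = 4 * ((a : ℝ)) ^ 2 := by
      have h2m : ((2:ℝ)) ^ m = 2 * (a : ℝ) := by exact_mod_cast congrArg (Nat.cast (R := ℝ)) hma
      rw [show (4:ℝ) = 2 ^ 2 by norm_num, ← pow_mul, mul_comm 2 m, pow_mul, h2m]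
      ring
    have h8m : (8 : ℝ) ^ (m - 1) = (a : ℝ) ^ 3 := by
      rw [show (8:ℝ) = 2 ^ 3 by norm_num, ← pow_mul, mul_comm 3 (m-1), pow_mul, ha]
      push_cast; ring
    rw [h4m, h8m, hnN]
    have ha1 : (1 : ℝ) ≤ (a : ℝ) := by exact_mod_cast Nat.one_le_two_pow
    have haNr : (a : ℝ) + 1 ≤ (N : ℝ) := by exact_mod_cast haN
    nlinarith [mul_nonneg (sq_nonneg (7 * ((N:ℝ) + 1) - 9 * a))
        (by nlinarith : (0:ℝ) ≤ 7 * ((N:ℝ) + 1) + 18 * a),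
      sq_nonneg ((a:ℝ) - 1)]
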